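/- Given a directed graph G with non-negative edge weights, a root r from which all vertices are reachable, and any shortest-path tree of G rooted at r, a minimum-weight shortest-path tree rooted at r exists; moreover its weight equals the sum, over all strongly connected components S (not containing r) of the zero-weight subgraph of the shortest-path subgraph, of the minimum weight of a shortest-path-subgraph edge entering S. -/

import Mathlib

open Finset

/-- A walk in a directed graph (relation) `E`, given as the list of its vertices. -/
def IsDiWalk {V : Type*} (E : V → V → Prop) (u v : V) (l : List V) : Prop :=
  l.head? = some u ∧ l.getLast? = some v ∧ l.Chain' E

/-- Weight of a directed walk: sum of weights of its consecutive pairs. -/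
noncomputable def dwalkWeight {V : Type*} (w : V → V → ℝ) (l : List V) : ℝ :=
  ((l.zip l.tail).map fun p => w p.1 p.2).sum

/-- Directed shortest-path distance from `u` to `v`. -/
noncomputable def ddist {V : Type*} (E : V → V → Prop) (w : V → V → ℝ) (u v : V) : ℝ :=
  sInf {x | ∃ l, IsDiWalk E u v l ∧ dwalkWeight w l = x}

/-- `T` is a branching (spanning arborescence) from `r` in the directed graph `E`:
its edges are edges of `E`, the root has no incoming edge, every other vertex has
exactly one incoming edge, and every vertex is reachable from `r` along `T`. -/
def IsBranching {V : Type*} (E T : V → V → Prop) (r : V) : Prop :=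
  (∀ u v, T u v → E u v) ∧ (∀ u, ¬ T u r) ∧ (∀ v, v ≠ r → ∃! u, T u v) ∧
    ∀ v, Relation.ReflTransGen T r v

open scoped Classical in
/-- Total weight of the edges of a directed subgraph `F`. -/
noncomputable def bweight {V : Type*} [Fintype V] (F : V → V → Prop) (w : V → V → ℝ) : ℝ :=
  ∑ p ∈ Finset.univ.filter (fun p : V × V => F p.1 p.2), w p.1 p.2
private def relPow {V : Type*} (R : V → V → Prop) : ℕ → V → V → Prop
  | 0 => Eq
  | n+1 => fun a c => ∃ b, relPow R n a b ∧ R b c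

private lemma reflTransGen_iff_relPow {V : Type*} {R : V → V → Prop} {a b : V} :
    Relation.ReflTransGen R a b ↔ ∃ n, relPow R n a b := by
  constructor
  · intro h
    induction h with
    | refl => exact ⟨0, rfl⟩
    | tail _ hbc ih => obtain ⟨n, hn⟩ := ih; exact ⟨n+1, _, hn, hbc⟩
  · rintro ⟨n, hn⟩
    induction n generalizing b with
    | zero => cases hn; rfl
    | succ n ih => obtain ⟨c, hc, hcb⟩ := hn; exact (ih hc).tail hcb

private lemma exists_branching {V : Type*} (R : V → V → Prop) (r : V)
    (h : ∀ v, Relation.ReflTransGen R r v) :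
    ∃ T : V → V → Prop, (∀ u v, T u v → R u v) ∧ (∀ u, ¬ T u r) ∧
      (∀ v, v ≠ r → ∃! u, T u v) ∧ ∀ v, Relation.ReflTransGen T r v := by
  classical
  have hex : ∀ v, ∃ n, relPow R n r v := fun v => reflTransGen_iff_relPow.1 (h v)
  set hops : V → ℕ := fun v => Nat.find (hex v) with hhops
  have hspec : ∀ v, relPow R (hops v) r v := fun v => Nat.find_spec (hex v)
  have hpos : ∀ v, v ≠ r → hops v ≠ 0 := by
    intro v hv h0
    have := hspec v
    rw [h0] at this
    exact hv this.symm
  have hpar : ∀ v, v ≠ r → ∃ u, relPow R (hops v - 1) r u ∧ R u v := by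
    intro v hv
    have h0 := hpos v hv
    have := hspec v
    rcases Nat.exists_eq_succ_of_ne_zero h0 with ⟨n, hn⟩
    rw [hn] at this
    obtain ⟨u, hu, huv⟩ := this
    exact ⟨u, by rw [hn]; simpa using hu, huv⟩
  set par : ∀ v, v ≠ r → V := fun v hv => Classical.choose (hpar v hv)
  refine ⟨fun u v => ∃ hv : v ≠ r, u = par v hv, ?_, ?_, ?_, ?_⟩
  · rintro u v ⟨hv, rfl⟩
    exact (Classical.choose_spec (hpar v hv)).2
  · rintro u ⟨hv, _⟩; exact hv rfl
  · intro v hv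
    exact ⟨par v hv, ⟨hv, rfl⟩, by rintro u ⟨_, rfl⟩; rfl⟩
  · have key : ∀ n (v : V), hops v = n → Relation.ReflTransGen (fun u v => ∃ hv : v ≠ r, u = par v hv) r v := by
      intro n
      induction n using Nat.strong_induction_on with
      | _ n ih =>
        intro v hn
        by_cases hv : v = r
        · subst hv; rfl
        · have hp := Classical.choose_spec (hpar v hv)
          have hlt : hops (par v hv) < hops v := by
            have : hops (par v hv) ≤ hops v - 1 := Nat.find_le hp.1
            have h0 := hpos v hv
            omega
          exact (ih (hops (par v hv)) (hn ▸ hlt) _ rfl).tail ⟨hv, rfl⟩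
    exact fun v => key (hops v) v rfl

section WalkLemmas
variable {V : Type*} {R : V → V → Prop} {w : V → V → ℝ}

private lemma dwalkWeight_nonneg (hw : ∀ u v, 0 ≤ w u v) (l : List V) :
    0 ≤ dwalkWeight w l := by
  apply List.sum_nonneg
  intro x hx
  simp only [List.mem_map] at hx
  obtain ⟨p, _, rfl⟩ := hx
  exact hw _ _

private lemma isDiWalk_singleton (u : V) : IsDiWalk R u u [u] := by
  refine ⟨rfl, rfl, List.isChain_singleton u⟩

private lemma IsDiWalk.ne_nil {u v : V} {l : List V} (h : IsDiWalk R u v l) : l ≠ [] := by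
  intro h0; rw [h0] at h; simp [IsDiWalk] at h

private lemma dwalkWeight_append_singleton {l : List V} {x : V} (y : V)
    (hl : l.getLast? = some x) : dwalkWeight w (l ++ [y]) = dwalkWeight w l + w x y := by
  induction l with
  | nil => simp at hl
  | cons a t ih =>
    cases t with
    | nil =>
      simp at hl
      subst hl
      simp [dwalkWeight]
    | cons b t' =>
      have hl' : (b :: t').getLast? = some x := by
        rw [List.getLast?_cons_cons] at hl; exact hl
      have := ih hl'
      simp only [dwalkWeight, List.cons_append, List.zip_cons_cons, List.map_cons,
        List.sum_cons, List.tail_cons] at this ⊢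
      linarith [this]

private lemma IsDiWalk.append {u x : V} {l : List V} (h : IsDiWalk R u x l) {y : V}
    (hxy : R x y) : IsDiWalk R u y (l ++ [y]) ∧
      dwalkWeight w (l ++ [y]) = dwalkWeight w l + w x y := by
  obtain ⟨h1, h2, h3⟩ := h
  have hne : l ≠ [] := by intro h0; rw [h0] at h1; simp at h1
  refine ⟨⟨?_, ?_, ?_⟩, dwalkWeight_append_singleton y h2⟩
  · rw [List.head?_append_of_ne_nil _ hne]; exact h1
  · simp
  · unfold List.Chain'
    rw [List.isChain_append]
    refine ⟨h3, List.isChain_singleton y, ?_⟩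
    intro a ha b hb
    simp at hb
    subst hb
    rw [h2] at ha
    cases ha
    exact hxy

private lemma exists_walk_of_reflTransGen {u v : V} (h : Relation.ReflTransGen R u v) :
    ∃ l, IsDiWalk R u v l := by
  induction h with
  | refl => exact ⟨[u], isDiWalk_singleton u⟩
  | tail _ hbc ih =>
    obtain ⟨l, hl⟩ := ih
    exact ⟨l ++ [_], (hl.append (w := fun _ _ => (0:ℝ)) hbc).1⟩

private lemma IsDiWalk.decomp {u v : V} {l : List V} (h : IsDiWalk R u v l) (hvu : v ≠ u) :
    ∃ l' x, IsDiWalk R u x l' ∧ R x v ∧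
      dwalkWeight w l = dwalkWeight w l' + w x v := by
  obtain ⟨h1, h2, h3⟩ := h
  have hne : l ≠ [] := by intro h0; rw [h0] at h1; simp at h1
  rcases (List.eq_nil_or_concat l) with h0 | ⟨l', b, rfl⟩
  · exact absurd h0 hne
  rw [List.concat_eq_append] at h1 h2 h3 hne
  have hb : b = v := by
    rw [List.getLast?_concat] at h2
    exact Option.some.inj h2
  subst hb
  have hl'ne : l' ≠ [] := by
    rintro rfl
    simp at h1
    first | exact hvu h1 | exact hvu h1.symm
  unfold List.Chain' at h3
  rw [List.isChain_append] at h3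
  obtain ⟨h3a, _, h3b⟩ := h3
  obtain ⟨x, hx⟩ := List.getLast?_isSome.mpr hl'ne |> Option.isSome_iff_exists.mp
  refine ⟨l', x, ⟨?_, hx, h3a⟩, h3b x hx b rfl, ?_⟩
  · rw [List.head?_append_of_ne_nil _ hl'ne] at h1; exact h1
  · rw [List.concat_eq_append]; exact dwalkWeight_append_singleton b hx

end WalkLemmas

section DDist
variable {V : Type*} {E : V → V → Prop} {w : V → V → ℝ}

private def dset (E : V → V → Prop) (w : V → V → ℝ) (u v : V) : Set ℝ :=
  {x | ∃ l, IsDiWalk E u v l ∧ dwalkWeight w l = x}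

private lemma ddist_eq (u v : V) : ddist E w u v = sInf (dset E w u v) := rfl

private lemma dset_nonneg (hw : ∀ u v, 0 ≤ w u v) {u v : V} :
    ∀ x ∈ dset E w u v, 0 ≤ x := by
  rintro x ⟨l, _, rfl⟩; exact dwalkWeight_nonneg hw l

private lemma dset_bddBelow (hw : ∀ u v, 0 ≤ w u v) (u v : V) :
    BddBelow (dset E w u v) := ⟨0, fun x hx => dset_nonneg hw x hx⟩

private lemma dset_nonempty {u v : V} (h : Relation.ReflTransGen E u v) :
    (dset E w u v).Nonempty := by
  obtain ⟨l, hl⟩ := exists_walk_of_reflTransGen h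
  exact ⟨dwalkWeight w l, l, hl, rfl⟩

private lemma ddist_le (hw : ∀ u v, 0 ≤ w u v) {u v : V} {x : ℝ}
    (hx : x ∈ dset E w u v) : ddist E w u v ≤ x :=
  csInf_le (dset_bddBelow hw u v) hx

private lemma le_ddist {u v : V} {c : ℝ} (hne : (dset E w u v).Nonempty)
    (h : ∀ x ∈ dset E w u v, c ≤ x) : c ≤ ddist E w u v :=
  le_csInf hne h

private lemma ddist_nonneg' (hw : ∀ u v, 0 ≤ w u v) {u v : V}
    (h : Relation.ReflTransGen E u v) : 0 ≤ ddist E w u v :=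
  le_ddist (dset_nonempty h) (dset_nonneg hw)

private lemma ddist_self (hw : ∀ u v, 0 ≤ w u v) (u : V) : ddist E w u u = 0 := by
  refine le_antisymm (ddist_le hw ⟨[u], isDiWalk_singleton u, ?_⟩)
    (ddist_nonneg' hw Relation.ReflTransGen.refl)
  simp [dwalkWeight]

private lemma ddist_triangle (hw : ∀ u v, 0 ≤ w u v) {r u v : V}
    (hru : Relation.ReflTransGen E r u) (huv : E u v) :
    ddist E w r v ≤ ddist E w r u + w u v := by
  rw [← sub_le_iff_le_add]
  apply le_ddist (dset_nonempty hru)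
  rintro x ⟨l, hl, rfl⟩
  rw [sub_le_iff_le_add]
  have := hl.append (w := w) huv
  exact (this.2 ▸ ddist_le hw ⟨l ++ [v], this.1, rfl⟩)

private lemma ddist_mono {T : V → V → Prop} (hw : ∀ u v, 0 ≤ w u v)
    (hsub : ∀ u v, T u v → E u v) {u v : V} (h : Relation.ReflTransGen T u v) :
    ddist E w u v ≤ ddist T w u v := by
  apply csInf_le_csInf (dset_bddBelow hw u v) (dset_nonempty h)
  rintro x ⟨l, hl, rfl⟩
  exact ⟨l, ⟨hl.1, hl.2.1, hl.2.2.imp (fun {a b} h => hsub a b h)⟩, rfl⟩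

end DDist

section Main
variable {V : Type*} {E T : V → V → Prop} {w : V → V → ℝ} {r : V}

/-- A branching whose edges all lie in the shortest-path subgraph preserves distances. -/
private lemma dist_of_subSP (hw : ∀ u v, 0 ≤ w u v)
    (hsub : ∀ u v, T u v → E u v ∧ ddist E w r u + w u v = ddist E w r v)
    (hre : ∀ v, Relation.ReflTransGen T r v) (v : V) :
    ddist T w r v = ddist E w r v := by
  have hwalk : ∀ v, Relation.ReflTransGen T r v →
      ∃ l, IsDiWalk T r v l ∧ dwalkWeight w l = ddist E w r v := by
    intro v h
    induction h with
    | refl => exact ⟨[r], isDiWalk_singleton r, by simp [dwalkWeight, ddist_self hw]⟩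
    | tail hx hxy ih =>
      obtain ⟨l, hl, hwt⟩ := ih
      have h2 := hl.append (w := w) hxy
      exact ⟨_, h2.1, by rw [h2.2, hwt, (hsub _ _ hxy).2]⟩
  refine le_antisymm ?_ (ddist_mono hw (fun u v h => (hsub u v h).1) (hre v))
  obtain ⟨l, hl, hwt⟩ := hwalk v (hre v)
  exact hwt ▸ ddist_le hw ⟨l, hl, rfl⟩

/-- Conversely, every edge of a distance-preserving branching is a shortest-path edge. -/
private lemma subSP_of_dist (hw : ∀ u v, 0 ≤ w u v)
    (hT : IsBranching E T r) (hd : ∀ v, ddist T w r v = ddist E w r v)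
    {u v : V} (huv : T u v) :
    ddist E w r u + w u v = ddist E w r v := by
  obtain ⟨hTE, hnr, huniq, hre⟩ := hT
  have hv : v ≠ r := fun h => hnr u (h ▸ huv)
  have hreE : ∀ x, Relation.ReflTransGen E r x :=
    fun x => Relation.ReflTransGen.mono (fun a b h => hTE a b h) _ _ (hre x)
  have h1 : ddist T w r u + w u v ≤ ddist T w r v := by
    apply le_ddist (dset_nonempty (hre v))
    rintro x ⟨l, hl, rfl⟩
    obtain ⟨l', x', hl', hx'v, hwt⟩ := hl.decomp (w := w) hv
    have hx'u : x' = u := by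
      obtain ⟨p, _, hp⟩ := huniq v hv
      rw [hp x' hx'v, hp u huv]
    subst hx'u
    rw [hwt]
    have := ddist_le hw ⟨l', hl', rfl⟩
    linarith
  have h2 : ddist E w r v ≤ ddist E w r u + w u v :=
    ddist_triangle hw (hreE u) (hTE u v huv)
  rw [hd u] at h1
  rw [hd v] at h1
  linarith

/-- In a branching, there is a rank function strictly increasing along edges. -/
private lemma rank_of_unique (hnr : ∀ u, ¬ T u r)
    (huniq : ∀ v, v ≠ r → ∃! u, T u v) (hre : ∀ v, Relation.ReflTransGen T r v) :
    ∃ ρ : V → ℕ, ∀ u v, T u v → ρ u < ρ v := by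
  classical
  have hex : ∀ v, ∃ n, relPow T n r v := fun v => reflTransGen_iff_relPow.1 (hre v)
  refine ⟨fun v => Nat.find (hex v), fun u v huv => ?_⟩
  have hv : v ≠ r := fun h => hnr u (h ▸ huv)
  have hspec := Nat.find_spec (hex v)
  have h0 : Nat.find (hex v) ≠ 0 := by
    intro h0; rw [h0] at hspec; exact hv hspec.symm
  rcases Nat.exists_eq_succ_of_ne_zero h0 with ⟨n, hn⟩
  rw [hn] at hspec
  obtain ⟨y, hy, hyv⟩ := hspec
  have hyu : y = u := by
    obtain ⟨p, _, hp⟩ := huniq v hv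
    rw [hp y hyv, hp u huv]
  rw [← hyu]
  have h2 : Nat.find (hex y) ≤ n := Nat.find_le hy
  show Nat.find (hex y) < Nat.find (hex v)
  omega

open scoped Classical in
private lemma bweight_eq_sum {V : Type*} [Fintype V] (T : V → V → Prop) (w : V → V → ℝ)
    (r : V) (huniq : ∀ v, v ≠ r → ∃! u, T u v) (pa : V → V)
    (hpa : ∀ v, v ≠ r → T (pa v) v) (hnr : ∀ u, ¬ T u r) :
    bweight T w = ∑ v ∈ Finset.univ.filter (fun v => v ≠ r), w (pa v) v := by
  rw [bweight]
  refine Finset.sum_nbij' (i := fun p : V × V => p.2) (j := fun v => (pa v, v))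
    ?_ ?_ ?_ ?_ ?_
  · intro p hp
    simp only [Finset.mem_filter, Finset.mem_univ, true_and] at hp ⊢
    exact fun h => hnr p.1 (h ▸ hp)
  · intro v hv
    simp only [Finset.mem_filter, Finset.mem_univ, true_and] at hv ⊢
    exact hpa v hv
  · intro p hp
    simp only [Finset.mem_filter, Finset.mem_univ, true_and] at hp
    have hp2 : p.2 ≠ r := fun h => hnr p.1 (h ▸ hp)
    obtain ⟨q, _, hq⟩ := huniq p.2 hp2
    have h1 : pa p.2 = p.1 := by rw [hq _ (hpa p.2 hp2), hq p.1 hp]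
    simp [h1]
  · intro v _; rfl
  · intro p hp
    simp only [Finset.mem_filter, Finset.mem_univ, true_and] at hp
    have hp2 : p.2 ≠ r := fun h => hnr p.1 (h ▸ hp)
    obtain ⟨q, _, hq⟩ := huniq p.2 hp2
    have h1 : pa p.2 = p.1 := by rw [hq _ (hpa p.2 hp2), hq p.1 hp]
    rw [h1]

end Main

/-- If a directed graph with nonnegative weights has a shortest-path
tree rooted at `r` (a branching from `r` preserving all distances from `r`), then a
minimum-weight shortest-path tree exists, and its weight equals the sum, over the
strongly connected components (not containing `r`) of the zero-weight subgraph of the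
shortest-path subgraph, of the minimum weight of a shortest-path-subgraph edge
entering the component. -/
theorem min_weight_shortest_path_tree {V : Type*} [Fintype V]
    (E : V → V → Prop) (w : V → V → ℝ) (hw : ∀ u v, 0 ≤ w u v) (r : V)
    (hreach : ∀ v, Relation.ReflTransGen E r v)
    (T0 : V → V → Prop)
    (hT0 : IsBranching E T0 r ∧ ∀ v, ddist T0 w r v = ddist E w r v)
    (SP : V → V → Prop)
    (hSP : ∀ x y, SP x y ↔ E x y ∧ ddist E w r x + w x y = ddist E w r y)
    (Z : V → V → Prop) (hZ : ∀ u v, Z u v ↔ SP u v ∧ w u v = 0)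
    (sc : V → V → Prop)
    (hsc : ∀ u v, sc u v ↔ Relation.ReflTransGen Z u v ∧ Relation.ReflTransGen Z v u) :
    ∃ T : V → V → Prop,
      (IsBranching E T r ∧ ∀ v, ddist T w r v = ddist E w r v) ∧
      (∀ T' : V → V → Prop,
        (IsBranching E T' r ∧ ∀ v, ddist T' w r v = ddist E w r v) →
        bweight T w ≤ bweight T' w) ∧
      ∀ (Reps : Finset V) (μ : V → ℝ),
        (∀ v ∈ Reps, ¬ sc v r) →
        (∀ v ∈ Reps, ∀ u ∈ Reps, v ≠ u → ¬ sc v u) →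
        (∀ u, ¬ sc u r → ∃ v ∈ Reps, sc u v) →
        (∀ v ∈ Reps,
          IsLeast {x | ∃ a b, SP a b ∧ sc b v ∧ ¬ sc a b ∧ w a b = x} (μ v)) →
        bweight T w = ∑ v ∈ Reps, μ v := by
  classical
  set d := ddist E w r with hdd
  obtain ⟨hT0b, hT0d⟩ := hT0
  obtain ⟨hT0E, hT0nr, hT0u, hT0re⟩ := hT0b
  have hSPsub : ∀ u v, SP u v → E u v := fun u v h => ((hSP u v).1 h).1
  have hSPd : ∀ u v, SP u v → d u + w u v = d v := fun u v h => ((hSP u v).1 h).2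
  have hT0SP : ∀ u v, T0 u v → SP u v := fun u v h =>
    (hSP u v).2 ⟨hT0E u v h, subSP_of_dist hw ⟨hT0E, hT0nr, hT0u, hT0re⟩ hT0d h⟩
  have hSPreach : ∀ v, Relation.ReflTransGen SP r v :=
    fun v => Relation.ReflTransGen.mono (fun a b h => hT0SP a b h) _ _ (hT0re v)
  have hZSP : ∀ u v, Z u v → SP u v := fun u v h => ((hZ u v).1 h).1
  have hZw : ∀ u v, Z u v → w u v = 0 := fun u v h => ((hZ u v).1 h).2
  have hZd : ∀ u v, Z u v → d u = d v := by
    intro u v h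
    have h1 := hSPd u v (hZSP u v h)
    rw [hZw u v h] at h1
    linarith
  have screfl : ∀ v, sc v v := fun v => (hsc v v).2 ⟨.refl, .refl⟩
  have scsymm : ∀ u v, sc u v → sc v u := fun u v h =>
    (hsc v u).2 ⟨((hsc u v).1 h).2, ((hsc u v).1 h).1⟩
  have sctrans : ∀ a b c, sc a b → sc b c → sc a c := fun a b c h1 h2 => (hsc a c).2
    ⟨((hsc a b).1 h1).1.trans ((hsc b c).1 h2).1, ((hsc b c).1 h2).2.trans ((hsc a b).1 h1).2⟩
  have hdZr : ∀ u v, Relation.ReflTransGen Z u v → d u = d v := by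
    intro u v h
    induction h with
    | refl => rfl
    | tail _ he ih => rw [ih, hZd _ _ he]
  have hdsc : ∀ u v, sc u v → d u = d v := fun u v h => hdZr u v ((hsc u v).1 h).1
  have hd0 : d r = 0 := ddist_self hw r
  have hdnn : ∀ v, 0 ≤ d v := fun v => ddist_nonneg' hw (hreach v)
  have hwr0 : ∀ u v, SP u v → sc v r → w u v = 0 := by
    intro u v h hvr
    have h1 := hSPd u v h
    have h2 : d v = 0 := by rw [hdsc v r hvr, hd0]
    have h3 := hdnn u
    have h4 := hw u v
    linarith
  have hmono : ∀ u v, Relation.ReflTransGen SP u v → d u ≤ d v := by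
    intro u v h
    induction h with
    | refl => exact le_refl _
    | @tail b c _ he ih =>
      have h1 := hSPd b c he
      have h2 := hw b c
      linarith
  have hcycZ : ∀ u v, Relation.ReflTransGen SP u v → d u = d v → Relation.ReflTransGen Z u v := by
    intro u v h
    induction h using Relation.ReflTransGen.head_induction_on with
    | refl => exact fun _ => .refl
    | @head a c he hp ih =>
      intro hduv
      have h1 : d c ≤ d v := hmono c v hp
      have h2 := hSPd a c he
      have h3 := hw a c
      have hz : Z a c := (hZ a c).2 ⟨he, by linarith⟩
      have hdc : d c = d v := by linarith
      exact (ih hdc).head hz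
  have hscofcyc : ∀ u v, Relation.ReflTransGen SP u v → Relation.ReflTransGen SP v u → sc u v := by
    intro u v h1 h2
    have e1 := hmono u v h1
    have e2 := hmono v u h2
    exact (hsc u v).2 ⟨hcycZ u v h1 (le_antisymm e1 e2), hcycZ v u h2 (le_antisymm e2 e1)⟩
  have hscSP : ∀ u v, sc u v → Relation.ReflTransGen SP u v := fun u v h =>
    Relation.ReflTransGen.mono (fun a b hz => hZSP a b hz) _ _ ((hsc u v).1 h).1
  -- representatives via quotient
  let st : Setoid V := ⟨sc, ⟨fun v => screfl v, fun {a b} h => scsymm a b h,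
    fun {a b c} h1 h2 => sctrans a b c h1 h2⟩⟩
  let rep : V → V := fun v => @Quotient.out V st (@Quotient.mk V st v)
  have hrep1 : ∀ v, sc v (rep v) := fun v => scsymm _ _ (@Quotient.mk_out V st v)
  have hrep2 : ∀ u v, sc u v → rep u = rep v := by
    intro u v h
    show (@Quotient.mk V st u).out = (@Quotient.mk V st v).out
    rw [Quotient.sound (s := st) h]
  -- the minima
  set Sst : V → Set ℝ := fun v => {x | ∃ a b, SP a b ∧ sc b v ∧ ¬ sc a b ∧ w a b = x} with hSst
  have hSfin : ∀ v, (Sst v).Finite := by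
    intro v
    apply Set.Finite.subset (Set.finite_range (fun p : V × V => w p.1 p.2))
    rintro x ⟨a, b, _, _, _, rfl⟩
    exact ⟨(a, b), rfl⟩
  have hfirst : ∀ v, ¬ sc v r → (Sst v).Nonempty := by
    intro v hvr
    have key : ∀ y, Relation.ReflTransGen SP y v → ¬ sc y v → ∃ a b, SP a b ∧ sc b v ∧ ¬ sc a b := by
      intro y h
      induction h using Relation.ReflTransGen.head_induction_on with
      | refl => exact fun hy => absurd (screfl v) hy
      | @head a c he hp ih =>
        intro hav
        by_cases hcv : sc c v
        · exact ⟨a, c, he, hcv, fun hac => hav (sctrans a c v hac hcv)⟩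
        · exact ih hcv
    obtain ⟨a, b, h1, h2, h3⟩ := key r (hSPreach v) (fun h => hvr (scsymm r v h))
    exact ⟨w a b, a, b, h1, h2, h3, rfl⟩
  have hleast : ∀ v, ¬ sc v r → IsLeast (Sst v) (sInf (Sst v)) := fun v hv =>
    ⟨(hfirst v hv).csInf_mem (hSfin v), fun x hx => csInf_le (hSfin v).bddBelow hx⟩
  have hScongr : ∀ u v, sc u v → Sst u = Sst v := by
    intro u v h
    ext x
    constructor
    · rintro ⟨a, b, h1, h2, h3, rfl⟩
      exact ⟨a, b, h1, sctrans _ _ _ h2 h, h3, rfl⟩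
    · rintro ⟨a, b, h1, h2, h3, rfl⟩
      exact ⟨a, b, h1, sctrans _ _ _ h2 (scsymm _ _ h), h3, rfl⟩
  -- entry edges
  have hentry_ex : ∀ u, ¬ sc u r →
      ∃ p : V × V, SP p.1 p.2 ∧ sc p.2 u ∧ ¬ sc p.1 p.2 ∧ w p.1 p.2 = sInf (Sst u) := by
    intro u hu
    obtain ⟨a, b, h1, h2, h3, h4⟩ := (hleast u hu).1
    exact ⟨(a, b), h1, h2, h3, h4⟩
  set ent : V → V × V := fun u => if h : ¬ sc u r then Classical.choose (hentry_ex u h) else (u, u)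
    with hent_def
  have hent : ∀ u, ¬ sc u r → SP (ent u).1 (ent u).2 ∧ sc (ent u).2 u ∧
      ¬ sc (ent u).1 (ent u).2 ∧ w (ent u).1 (ent u).2 = sInf (Sst u) := by
    intro u h
    simp only [hent_def, dif_pos h]
    exact Classical.choose_spec (hentry_ex u h)
  set F : V → V × V := fun v => ent (rep v) with hF_def
  have hFcongr : ∀ u v, sc u v → F u = F v := by
    intro u v h
    simp only [hF_def, hrep2 u v h]
  have hrepr : ∀ v, ¬ sc v r → ¬ sc (rep v) r :=
    fun v h hc => h (sctrans _ _ _ (hrep1 v) hc)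
  have hF : ∀ v, ¬ sc v r → SP (F v).1 (F v).2 ∧ sc (F v).2 v ∧ ¬ sc (F v).1 (F v).2 ∧
      w (F v).1 (F v).2 = sInf (Sst v) := by
    intro v h
    obtain ⟨h1, h2, h3, h4⟩ := hent (rep v) (hrepr v h)
    exact ⟨h1, sctrans _ _ _ h2 (scsymm _ _ (hrep1 v)), h3,
      by rw [hF_def]; rw [h4, hScongr (rep v) v (scsymm _ _ (hrep1 v))]⟩
  -- the pruned graph E'
  set E' : V → V → Prop := fun u v => (Z u v ∧ sc u v) ∨ (¬ sc v r ∧ (u, v) = F v) with hE'_def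
  have hE'SP : ∀ u v, E' u v → SP u v := by
    rintro u v (⟨hz, _⟩ | ⟨hv, hp⟩)
    · exact hZSP u v hz
    · have h1 := (hF v hv).1
      rw [← hp] at h1
      exact h1
  have hintra0 : ∀ x y, Relation.ReflTransGen Z x y → Relation.ReflTransGen Z y x →
      Relation.ReflTransGen E' x y := by
    intro x y hxy
    induction hxy using Relation.ReflTransGen.head_induction_on with
    | refl => exact fun _ => .refl
    | @head a c he hp ih =>
      intro hya
      have hyc : Relation.ReflTransGen Z y c := hya.tail he
      have hac : sc a c := (hsc a c).2 ⟨Relation.ReflTransGen.single he, hp.trans hya⟩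
      exact Relation.ReflTransGen.head (Or.inl ⟨he, hac⟩) (ih hyc)
  have hintra : ∀ x y, sc x y → Relation.ReflTransGen E' x y :=
    fun x y h => hintra0 x y ((hsc x y).1 h).1 ((hsc x y).1 h).2
  set m : V → ℕ := fun v => (Finset.univ.filter (fun u => Relation.ReflTransGen SP u v)).card
    with hm_def
  have hreachE' : ∀ v, Relation.ReflTransGen E' r v := by
    have key : ∀ n v, m v = n → Relation.ReflTransGen E' r v := by
      intro n
      induction n using Nat.strong_induction_on with
      | _ n ih =>
        intro v hn
        by_cases hvr : sc v r
        · exact hintra r v (scsymm v r hvr)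
        · obtain ⟨h1, h2, h3, h4⟩ := hF v hvr
          have hbv : sc (F v).2 v := h2
          have hav : ¬ sc (F v).1 v := fun h => h3 (sctrans _ _ _ h (scsymm _ _ hbv))
          have hreachav : Relation.ReflTransGen SP (F v).1 v :=
            (Relation.ReflTransGen.single h1).trans (hscSP _ _ hbv)
          have hmlt : m (F v).1 < m v := by
            apply Finset.card_lt_card
            rw [Finset.ssubset_iff_of_subset]
            · refine ⟨v, Finset.mem_filter.2 ⟨Finset.mem_univ v, Relation.ReflTransGen.refl⟩, ?_⟩
              simp only [Finset.mem_filter, Finset.mem_univ, true_and]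
              intro hva
              exact hav (scsymm _ _ (hscofcyc v (F v).1 hva hreachav))
            · intro u hu
              simp only [Finset.mem_filter, Finset.mem_univ, true_and] at hu ⊢
              exact hu.trans hreachav
          have hra := ih (m (F v).1) (hn ▸ hmlt) (F v).1 rfl
          have hbr : ¬ sc (F v).2 r := fun hbr => hvr (sctrans v _ r (scsymm _ _ hbv) hbr)
          have hE'ab : E' (F v).1 (F v).2 := by
            refine Or.inr ⟨hbr, ?_⟩
            rw [hFcongr (F v).2 v hbv]
          exact (hra.tail hE'ab).trans (hintra (F v).2 v hbv)
    exact fun v => key (m v) v rfl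
  obtain ⟨T, hTE', hTnr, hTu, hTre⟩ := exists_branching E' r hreachE'
  have hTSP : ∀ u v, T u v → SP u v := fun u v h => hE'SP u v (hTE' u v h)
  have hTB : IsBranching E T r := ⟨fun u v h => hSPsub u v (hTSP u v h), hTnr, hTu, hTre⟩
  have hTd : ∀ v, ddist T w r v = ddist E w r v :=
    dist_of_subSP hw (fun u v h => ⟨hSPsub u v (hTSP u v h), hSPd u v (hTSP u v h)⟩) hTre
  -- the master counting lemma
  have key : ∀ (T' : V → V → Prop), (∀ u v, T' u v → SP u v) → (∀ u, ¬ T' u r) →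
      (∀ v, v ≠ r → ∃! u, T' u v) → (∀ v, Relation.ReflTransGen T' r v) →
      ∀ (Reps : Finset V) (μ : V → ℝ),
        (∀ v ∈ Reps, ¬ sc v r) →
        (∀ v ∈ Reps, ∀ u ∈ Reps, v ≠ u → ¬ sc v u) →
        (∀ u, ¬ sc u r → ∃ v ∈ Reps, sc u v) →
        (∀ v ∈ Reps, IsLeast {x | ∃ a b, SP a b ∧ sc b v ∧ ¬ sc a b ∧ w a b = x} (μ v)) →
        (∑ v ∈ Reps, μ v ≤ bweight T' w) ∧
        ((∀ u v, T' u v → E' u v) → bweight T' w = ∑ v ∈ Reps, μ v) := by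
    intro T' hT'SP hT'nr hT'u hT're Reps μ hR1 hR2 hR3 hR4
    set pa : V → V := fun v => if h : v ≠ r then Classical.choose (hT'u v h) else v with hpa_def
    have hpa : ∀ v, v ≠ r → T' (pa v) v := by
      intro v h
      simp only [hpa_def, dif_pos h]
      exact (Classical.choose_spec (hT'u v h)).1
    have hb1 := bweight_eq_sum T' w r hT'u pa hpa hT'nr
    obtain ⟨ρ, hρ⟩ := rank_of_unique hT'nr hT'u hT're
    have hrnotin : r ∉ Reps := fun h => hR1 r h (screfl r)
    set g : V → V := fun u => if h : ¬ sc u r then Classical.choose (hR3 u h) else r with hg_def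
    have hg1 : ∀ u, ¬ sc u r → g u ∈ Reps ∧ sc u (g u) := by
      intro u h
      simp only [hg_def, dif_pos h]
      exact ⟨(Classical.choose_spec (hR3 u h)).1, (Classical.choose_spec (hR3 u h)).2⟩
    have hg2 : ∀ u, sc u r → g u = r := by
      intro u h
      simp only [hg_def, dif_neg (not_not.2 h)]
    have hgmem : ∀ u ∈ Finset.univ.filter (fun v : V => v ≠ r), g u ∈ insert r Reps := by
      intro u _
      by_cases h : sc u r
      · rw [hg2 u h]; exact Finset.mem_insert_self _ _
      · exact Finset.mem_insert_of_mem (hg1 u h).1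
    have hb2 : bweight T' w = ∑ v ∈ insert r Reps,
        ∑ u ∈ (Finset.univ.filter (fun v : V => v ≠ r)).filter (fun u => g u = v), w (pa u) u := by
      rw [hb1, ← Finset.sum_fiberwise_of_maps_to hgmem]
    have hfr : ∀ u ∈ (Finset.univ.filter (fun v : V => v ≠ r)).filter (fun u => g u = r),
        w (pa u) u = 0 := by
      intro u hu
      simp only [Finset.mem_filter, Finset.mem_univ, true_and] at hu
      obtain ⟨hur, hgu⟩ := hu
      have hscur : sc u r := by
        by_contra h
        have h5 := (hg1 u h).1
        rw [hgu] at h5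
        exact hrnotin h5
      exact hwr0 (pa u) u (hT'SP _ _ (hpa u hur)) hscur
    have hfib : ∀ v ∈ Reps, (Finset.univ.filter (fun x : V => x ≠ r)).filter (fun u => g u = v)
        = Finset.univ.filter (fun u => sc u v) := by
      intro v hv
      ext u
      simp only [Finset.mem_filter, Finset.mem_univ, true_and]
      constructor
      · rintro ⟨hur, hgu⟩
        by_cases h : sc u r
        · rw [hg2 u h] at hgu
          exact absurd (hgu ▸ hv) hrnotin
        · obtain ⟨_, hsug⟩ := hg1 u h
          exact hgu ▸ hsug
      · intro hsuv
        have hunr : ¬ sc u r := fun h => hR1 v hv (sctrans v u r (scsymm u v hsuv) h)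
        have hur : u ≠ r := fun h => hunr (h ▸ screfl r)
        refine ⟨hur, ?_⟩
        obtain ⟨hgR, hsug⟩ := hg1 u hunr
        by_contra hne
        exact hR2 v hv (g u) hgR (fun h => hne h.symm) (sctrans v u (g u) (scsymm u v hsuv) hsug)
    have hb3 : bweight T' w = ∑ v ∈ Reps, ∑ u ∈ Finset.univ.filter (fun u => sc u v), w (pa u) u := by
      rw [hb2, Finset.sum_insert hrnotin, Finset.sum_eq_zero hfr, zero_add]
      exact Finset.sum_congr rfl (fun v hv => by rw [hfib v hv])
    have hnerMem : ∀ v u, sc u v → v ∈ Reps → u ≠ r := by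
      intro v u hsuv hv h
      exact hR1 v hv (scsymm r v (h ▸ hsuv))
    have hexit : ∀ v ∈ Reps, ∃ u, sc u v ∧ ¬ sc (pa u) v := by
      intro v hv
      have hne : (Finset.univ.filter (fun u => sc u v)).Nonempty := ⟨v, by simp [screfl v]⟩
      obtain ⟨u, hu, hmin⟩ := Finset.exists_min_image _ ρ hne
      simp only [Finset.mem_filter, Finset.mem_univ, true_and] at hu
      refine ⟨u, hu, fun hpav => ?_⟩
      have hur : u ≠ r := hnerMem v u hu hv
      have hT'p := hpa u hur
      have h5 := hmin (pa u) (by simp [hpav])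
      exact absurd (hρ _ _ hT'p) (not_lt.2 h5)
    have hlow : ∀ v ∈ Reps, μ v ≤ ∑ u ∈ Finset.univ.filter (fun u => sc u v), w (pa u) u := by
      intro v hv
      obtain ⟨u, hu1, hu2⟩ := hexit v hv
      have hur : u ≠ r := hnerMem v u hu1 hv
      have hmem : w (pa u) u ∈ {x | ∃ a b, SP a b ∧ sc b v ∧ ¬ sc a b ∧ w a b = x} :=
        ⟨pa u, u, hT'SP _ _ (hpa u hur), hu1, fun h => hu2 (sctrans _ _ _ h hu1), rfl⟩
      have h1 : μ v ≤ w (pa u) u := (hR4 v hv).2 hmem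
      have h2 : w (pa u) u ≤ ∑ x ∈ Finset.univ.filter (fun u => sc u v), w (pa x) x :=
        Finset.single_le_sum (fun i _ => hw (pa i) i) (by simp [hu1])
      linarith
    constructor
    · rw [hb3]
      exact Finset.sum_le_sum hlow
    · intro hT'E'
      rw [hb3]
      refine Finset.sum_congr rfl ?_
      intro v hv
      obtain ⟨hF1, hF2, hF3, hF4⟩ := hF v (hR1 v hv)
      have hμ : μ v = sInf (Sst v) :=
        le_antisymm ((hR4 v hv).2 (hleast v (hR1 v hv)).1) ((hleast v (hR1 v hv)).2 (hR4 v hv).1)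
      have hbmem : (F v).2 ∈ Finset.univ.filter (fun u => sc u v) := by simp [hF2]
      have hzero : ∀ u ∈ Finset.univ.filter (fun u => sc u v), u ≠ (F v).2 → w (pa u) u = 0 := by
        intro u hu hub
        simp only [Finset.mem_filter, Finset.mem_univ, true_and] at hu
        have hur : u ≠ r := hnerMem v u hu hv
        rcases hT'E' _ _ (hpa u hur) with ⟨hz, _⟩ | ⟨_, hp⟩
        · exact hZw _ _ hz
        · exfalso
          apply hub
          rw [hFcongr u v hu] at hp
          exact congrArg Prod.snd hp
      rw [Finset.sum_eq_single_of_mem (F v).2 hbmem hzero]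
      obtain ⟨u0, hu01, hu02⟩ := hexit v hv
      have hu0r : u0 ≠ r := hnerMem v u0 hu01 hv
      have hu0b : u0 = (F v).2 ∧ pa u0 = (F v).1 := by
        rcases hT'E' _ _ (hpa u0 hu0r) with ⟨_, hscp⟩ | ⟨_, hp⟩
        · exact absurd (sctrans _ _ _ hscp hu01) hu02
        · rw [hFcongr u0 v hu01] at hp
          exact ⟨congrArg Prod.snd hp, congrArg Prod.fst hp⟩
      rw [← hu0b.1, hu0b.2, hu0b.1, hF4, hμ]
  -- assemble
  have hReps0 : True := trivial
  set Reps₀ : Finset V := (Finset.univ.filter (fun v => ¬ sc v r)).image rep with hReps0_def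
  set μ₀ : V → ℝ := fun v => sInf (Sst v) with hμ0_def
  have hA : ∀ v ∈ Reps₀, ¬ sc v r := by
    intro v hv
    simp only [hReps0_def, Finset.mem_image, Finset.mem_filter, Finset.mem_univ, true_and] at hv
    obtain ⟨u, hu, rfl⟩ := hv
    exact hrepr u hu
  have hB : ∀ v ∈ Reps₀, ∀ u ∈ Reps₀, v ≠ u → ¬ sc v u := by
    intro v hv u hu hne hscvu
    simp only [hReps0_def, Finset.mem_image, Finset.mem_filter, Finset.mem_univ, true_and] at hv hu
    obtain ⟨x, hx, rfl⟩ := hv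
    obtain ⟨y, hy, rfl⟩ := hu
    apply hne
    apply hrep2
    exact sctrans _ _ _ (hrep1 x) (sctrans _ _ _ hscvu (scsymm _ _ (hrep1 y)))
  have hC : ∀ u, ¬ sc u r → ∃ v ∈ Reps₀, sc u v := by
    intro u hu
    refine ⟨rep u, ?_, hrep1 u⟩
    simp only [hReps0_def, Finset.mem_image, Finset.mem_filter, Finset.mem_univ, true_and]
    exact ⟨u, hu, rfl⟩
  have hD : ∀ v ∈ Reps₀, IsLeast {x | ∃ a b, SP a b ∧ sc b v ∧ ¬ sc a b ∧ w a b = x} (μ₀ v) :=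
    fun v hv => hleast v (hA v hv)
  refine ⟨T, ⟨hTB, hTd⟩, ?_, ?_⟩
  · rintro T' ⟨hT'B, hT'd⟩
    have hT'SP : ∀ u v, T' u v → SP u v := fun u v h =>
      (hSP u v).2 ⟨hT'B.1 u v h, subSP_of_dist hw hT'B hT'd h⟩
    have heq := (key T hTSP hTnr hTu hTre Reps₀ μ₀ hA hB hC hD).2 hTE'
    have h2 := (key T' hT'SP hT'B.2.1 hT'B.2.2.1 hT'B.2.2.2 Reps₀ μ₀ hA hB hC hD).1
    rw [heq]
    exact h2
  · intro Reps μ h1 h2 h3 h4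
    exact (key T hTSP hTnr hTu hTre Reps μ h1 h2 h3 h4).2 hTE'
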